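/- Let p < n and let {A,B} be an (m,p,n)-GMP with GSVD as in the context, with generalized singular values (αᵢ, βᵢ). If n−p < ⌊n/2⌋, then for every ⌊n/2⌋+1 ≤ i ≤ n both formulations hold: βᵢ² = max_{Ψ ∈ 𝕌_p} Re tr(Bᴴ Ψᴴ 𝒫_i Ψ B (AᴴA + BᴴB)^{-1}) − max_{Ψ ∈ 𝕌_p} Re tr(Bᴴ Ψᴴ 𝒫_{i+1} Ψ B (AᴴA + BᴴB)^{-1}) and βᵢ = max_{Ξ₃ ∈ 𝕌_n, Ξ₄ ∈ 𝕌_p} |tr(Ξ₃ (AᴴA + BᴴB)^{-1/2} Bᴴ Ξ₄ 𝒲_i)| − max_{Ξ₃ ∈ 𝕌_n, Ξ₄ ∈ 𝕌_p} |tr(Ξ₃ (AᴴA + BᴴB)^{-1/2} Bᴴ Ξ₄ 𝒲_{i+1})|. If instead n−p > ⌊n/2⌋, then β_{⌊n/2⌋+1} = ⋯ = β_{n−p} = 0 and the same two formulations hold for every n−p+1 ≤ i ≤ n. -/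

import Mathlib

open Matrix BigOperators
open scoped ComplexOrder


-- generalized lemA
lemma lemA {p : ℕ} (d c : Fin p → ℝ) (hd0 : ∀ k, 0 ≤ d k)
    (hdmono : Monotone d) (P : Fin p → Prop) [DecidablePred P]
    (hup : ∀ j k : Fin p, P j → j ≤ k → P k)
    (hc0 : ∀ k, 0 ≤ c k) (hc1 : ∀ k, c k ≤ 1)
    (hsum : ∑ k, c k ≤ (Finset.univ.filter P).card) :
    ∑ k, d k * c k ≤ ∑ k ∈ Finset.univ.filter P, d k := by
  set T := Finset.univ.filter P with hT
  by_cases hne : T.Nonempty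
  · set m := T.min' hne with hm
    have hmemT : ∀ k : Fin p, k ∈ T ↔ m ≤ k := by
      intro k
      constructor
      · intro hk; exact T.min'_le k hk
      · intro hk
        have hmT : m ∈ T := T.min'_mem hne
        simp only [hT, Finset.mem_filter, Finset.mem_univ, true_and] at hmT ⊢
        exact hup m k hmT hk
    have hdm : ∀ k ∉ T, d k ≤ d m := by
      intro k hk
      have : ¬ (m ≤ k) := fun h => hk ((hmemT k).2 h)
      exact hdmono (le_of_not_ge this)
    have split : ∑ k, d k * c k = ∑ k ∈ T, d k * c k + ∑ k ∈ Tᶜ, d k * c k :=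
      (Finset.sum_add_sum_compl T _).symm
    have splitc : ∑ k, c k = ∑ k ∈ T, c k + ∑ k ∈ Tᶜ, c k :=
      (Finset.sum_add_sum_compl T _).symm
    have h1 : ∑ k ∈ Tᶜ, d k * c k ≤ d m * ∑ k ∈ Tᶜ, c k := by
      rw [Finset.mul_sum]
      apply Finset.sum_le_sum
      intro k hk
      exact mul_le_mul_of_nonneg_right (hdm k (Finset.mem_compl.mp hk)) (hc0 k)
    have h2 : ∑ k ∈ T, d k * c k ≤ ∑ k ∈ T, (d k - d m) + d m * ∑ k ∈ T, c k := by
      rw [Finset.mul_sum, ← Finset.sum_add_distrib]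
      apply Finset.sum_le_sum
      intro k hk
      have hk' : d m ≤ d k := hdmono ((hmemT k).1 hk)
      nlinarith [hc0 k, hc1 k]
    have h3 : d m * ∑ k ∈ T, c k + d m * ∑ k ∈ Tᶜ, c k ≤ d m * T.card := by
      rw [← mul_add, ← splitc]
      exact mul_le_mul_of_nonneg_left hsum (hd0 m)
    have h4 : ∑ k ∈ T, (d k - d m) + d m * T.card = ∑ k ∈ T, d k := by
      rw [Finset.sum_sub_distrib, Finset.sum_const, nsmul_eq_mul]
      ring
    linarith
  · have hT0 : T.card = 0 := by
      simp [Finset.not_nonempty_iff_eq_empty.mp hne]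
    have hcall : ∀ k, c k = 0 := by
      intro k
      by_contra hk
      have hpos : 0 < c k := lt_of_le_of_ne (hc0 k) (Ne.symm hk)
      have : 0 < ∑ j, c j := Finset.sum_pos' (fun j _ => hc0 j) ⟨k, Finset.mem_univ k, hpos⟩
      rw [hT0] at hsum
      simp at hsum
      linarith
    have hz : ∑ k, d k * c k = 0 := Finset.sum_eq_zero (fun k _ => by rw [hcall k]; ring)
    rw [hz]
    exact Finset.sum_nonneg (fun k _ => hd0 k)


def gmap {p n : ℕ} (hpn : p < n) (k : Fin p) : Fin n := ⟨n + k - p, by omega⟩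

lemma gmap_coe {p n : ℕ} (hpn : p < n) (k : Fin p) : ((gmap hpn k : Fin n) : ℕ) = n + k - p := rfl

lemma gmap_inj {p n : ℕ} (hpn : p < n) : Function.Injective (gmap hpn) := by
  intro a b hab
  have h1 : ((gmap hpn a : Fin n) : ℕ) = ((gmap hpn b : Fin n) : ℕ) := by rw [hab]
  rw [gmap_coe, gmap_coe] at h1
  have := a.isLt; have := b.isLt
  exact Fin.ext (by omega)

lemma sigHsig {p n : ℕ} (β : Fin n → ℝ)
    (hzero : ∀ k : Fin n, (k : ℕ) + p < n → β k = 0) :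
    (Matrix.of fun (k : Fin p) (l : Fin n) =>
        if (l : ℕ) + p = n + (k : ℕ) then Complex.ofReal (β l) else 0)ᴴ *
    (Matrix.of fun (k : Fin p) (l : Fin n) =>
        if (l : ℕ) + p = n + (k : ℕ) then Complex.ofReal (β l) else 0)
    = Matrix.diagonal (fun l : Fin n => (Complex.ofReal (β l))^2) := by
  ext l l'
  rw [Matrix.mul_apply]
  have hterm : ∀ k : Fin p, star ((Matrix.of fun (k : Fin p) (l : Fin n) =>
        if (l : ℕ) + p = n + (k : ℕ) then Complex.ofReal (β l) else 0) k l) *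
      ((Matrix.of fun (k : Fin p) (l : Fin n) =>
        if (l : ℕ) + p = n + (k : ℕ) then Complex.ofReal (β l) else 0) k l')
      = if ((l : ℕ) + p = n + (k : ℕ) ∧ (l' : ℕ) + p = n + (k : ℕ)) then (Complex.ofReal (β l)) * (Complex.ofReal (β l')) else 0 := by
    intro k
    simp only [Matrix.of_apply]
    by_cases h1 : (l:ℕ) + p = n + (k:ℕ) <;> by_cases h2 : (l':ℕ) + p = n + (k:ℕ)
    · rw [if_pos h1, if_pos h2, if_pos ⟨h1, h2⟩]
      simp [Complex.star_def, Complex.conj_ofReal]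
    · rw [if_pos h1, if_neg h2, mul_zero]
      exact (if_neg (fun h : _ ∧ _ => h2 h.2)).symm
    · rw [if_neg h1, star_zero, zero_mul]
      exact (if_neg (fun h : _ ∧ _ => h1 h.1)).symm
    · rw [if_neg h1, star_zero, zero_mul]
      exact (if_neg (fun h : _ ∧ _ => h1 h.1)).symm
  simp only [Matrix.conjTranspose_apply]
  rw [Finset.sum_congr rfl (fun k _ => hterm k)]
  by_cases hll : l = l'
  · subst hll
    rw [Matrix.diagonal_apply_eq]
    by_cases hl : n ≤ (l:ℕ) + p
    · have hlt : (l:ℕ) + p - n < p := by have := l.isLt; omega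
      rw [Finset.sum_eq_single (⟨(l:ℕ)+p-n, hlt⟩ : Fin p)]
      · rw [if_pos ⟨by simp; omega, by simp; omega⟩]; ring
      · intro b _ hb
        rw [if_neg]
        rintro ⟨hc, -⟩
        exact hb (Fin.ext (by simp; omega))
      · intro h; exact absurd (Finset.mem_univ _) h
    · rw [hzero l (by omega)]
      rw [Finset.sum_eq_zero (fun k _ => if_neg (by omega))]
      simp
  · rw [Matrix.diagonal_apply_ne _ hll]
    apply Finset.sum_eq_zero
    intro k _
    apply if_neg
    rintro ⟨h1, h2⟩
    exact hll (Fin.ext (by omega))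

lemma sigSigH {p n : ℕ} (hpn : p < n) (β : Fin n → ℝ) :
    (Matrix.of fun (k : Fin p) (l : Fin n) =>
        if (l : ℕ) + p = n + (k : ℕ) then Complex.ofReal (β l) else 0) *
    (Matrix.of fun (k : Fin p) (l : Fin n) =>
        if (l : ℕ) + p = n + (k : ℕ) then Complex.ofReal (β l) else 0)ᴴ
    = Matrix.diagonal (fun k : Fin p => (Complex.ofReal (β (gmap hpn k)))^2) := by
  ext k k'
  rw [Matrix.mul_apply]
  have hterm : ∀ l : Fin n, ((Matrix.of fun (k : Fin p) (l : Fin n) =>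
        if (l : ℕ) + p = n + (k : ℕ) then Complex.ofReal (β l) else 0) k l) *
      star ((Matrix.of fun (k : Fin p) (l : Fin n) =>
        if (l : ℕ) + p = n + (k : ℕ) then Complex.ofReal (β l) else 0) k' l)
      = if ((l : ℕ) + p = n + (k : ℕ) ∧ (l : ℕ) + p = n + (k' : ℕ)) then (Complex.ofReal (β l))^2 else 0 := by
    intro l
    simp only [Matrix.of_apply]
    by_cases h1 : (l:ℕ) + p = n + (k:ℕ) <;> by_cases h2 : (l:ℕ) + p = n + (k':ℕ)
    · rw [if_pos h1, if_pos h2, if_pos ⟨h1, h2⟩]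
      simp [Complex.star_def, Complex.conj_ofReal, sq]
    · rw [if_pos h1, if_neg h2, star_zero, mul_zero]
      exact (if_neg (fun h : _ ∧ _ => h2 h.2)).symm
    · rw [if_neg h1, zero_mul]
      exact (if_neg (fun h : _ ∧ _ => h1 h.1)).symm
    · rw [if_neg h1, zero_mul]
      exact (if_neg (fun h : _ ∧ _ => h1 h.1)).symm
  simp only [Matrix.conjTranspose_apply]
  rw [Finset.sum_congr rfl (fun l _ => hterm l)]
  by_cases hkk : k = k'
  · subst hkk
    rw [Matrix.diagonal_apply_eq]
    rw [Finset.sum_eq_single (gmap hpn k)]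
    · rw [if_pos ⟨by rw [gmap_coe]; omega, by rw [gmap_coe]; omega⟩]
    · intro l _ hl
      apply if_neg
      rintro ⟨h1, -⟩
      apply hl
      apply Fin.ext
      rw [gmap_coe]
      omega
    · intro h; exact absurd (Finset.mem_univ _) h
  · rw [Matrix.diagonal_apply_ne _ hkk]
    apply Finset.sum_eq_zero
    intro l _
    apply if_neg
    rintro ⟨h1, h2⟩
    exact hkk (Fin.ext (by omega))


section
variable {m p n : ℕ}


lemma unit_row {p : ℕ} (U : Matrix (Fin p) (Fin p) ℂ) (hU : U ∈ Matrix.unitaryGroup (Fin p) ℂ)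
    (k : Fin p) : ∑ j, Complex.normSq (U k j) = 1 := by
  have h := Matrix.mem_unitaryGroup_iff.mp hU
  have hk : (U * star U) k k = (1 : Matrix (Fin p) (Fin p) ℂ) k k := by rw [h]
  rw [Matrix.mul_apply, Matrix.one_apply_eq] at hk
  have : ∑ j, (Complex.normSq (U k j) : ℂ) = 1 := by
    rw [← hk]
    apply Finset.sum_congr rfl
    intro j _
    rw [Matrix.star_apply, ← Complex.mul_conj (U k j), Complex.star_def]
  exact_mod_cast this

lemma unit_col {p : ℕ} (U : Matrix (Fin p) (Fin p) ℂ) (hU : U ∈ Matrix.unitaryGroup (Fin p) ℂ)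
    (j : Fin p) : ∑ k, Complex.normSq (U k j) = 1 := by
  have h := Matrix.mem_unitaryGroup_iff'.mp hU
  have hk : (star U * U) j j = (1 : Matrix (Fin p) (Fin p) ℂ) j j := by rw [h]
  rw [Matrix.mul_apply, Matrix.one_apply_eq] at hk
  have : ∑ k, (Complex.normSq (U k j) : ℂ) = 1 := by
    rw [← hk]
    apply Finset.sum_congr rfl
    intro k _
    rw [Matrix.star_apply, Complex.star_def, ← Complex.normSq_eq_conj_mul_self]
  exact_mod_cast this
end


section
variable {m p n : ℕ}


-- assume previous lemmas; test the reduction lemma key1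
lemma key1 (hpn : p < n)
    (A : Matrix (Fin m) (Fin n) ℂ) (B : Matrix (Fin p) (Fin n) ℂ)
    (V : Matrix (Fin p) (Fin p) ℂ) (hV : V ∈ Matrix.unitaryGroup (Fin p) ℂ)
    (R : Matrix (Fin n) (Fin n) ℂ) (hR : IsUnit R.det)
    (β : Fin n → ℝ)
    (hB : B = V * (Matrix.of fun (k : Fin p) (l : Fin n) =>
        if (l : ℕ) + p = n + (k : ℕ) then Complex.ofReal (β l) else 0) * R)
    (hM : Aᴴ * A + Bᴴ * B = Rᴴ * R)
    (hD : (Matrix.of fun (k : Fin p) (l : Fin n) =>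
        if (l : ℕ) + p = n + (k : ℕ) then Complex.ofReal (β l) else 0) *
      (Matrix.of fun (k : Fin p) (l : Fin n) =>
        if (l : ℕ) + p = n + (k : ℕ) then Complex.ofReal (β l) else 0)ᴴ
      = Matrix.diagonal (fun k : Fin p => (Complex.ofReal (β (gmap hpn k)))^2))
    (t : ℕ) (Φ : Matrix (Fin p) (Fin p) ℂ) (hΦ : Φ ∈ Matrix.unitaryGroup (Fin p) ℂ) :
    (Matrix.trace (Bᴴ * Φᴴ *
        Matrix.diagonal (fun k : Fin p => if t ≤ (k : ℕ) + n then (1 : ℂ) else 0) *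
        Φ * B * (Aᴴ * A + Bᴴ * B)⁻¹)).re
    = ∑ k : Fin p, ∑ j : Fin p, (if t ≤ (k : ℕ) + n then (1:ℝ) else 0) *
        ((β (gmap hpn j))^2 * Complex.normSq ((Φ * V) k j)) := by
  set Sig : Matrix (Fin p) (Fin n) ℂ := (Matrix.of fun (k : Fin p) (l : Fin n) =>
        if (l : ℕ) + p = n + (k : ℕ) then Complex.ofReal (β l) else 0) with hSigdef
  set Pm : Matrix (Fin p) (Fin p) ℂ :=
    Matrix.diagonal (fun k : Fin p => if t ≤ (k : ℕ) + n then (1 : ℂ) else 0) with hPmdef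
  set U : Matrix (Fin p) (Fin p) ℂ := Φ * V with hUdef
  have hR' : IsUnit Rᴴ.det := by rw [Matrix.det_conjTranspose]; exact hR.star
  have hRR : R * (R⁻¹ * (Rᴴ)⁻¹) = (Rᴴ)⁻¹ := by
    rw [← Matrix.mul_assoc, Matrix.mul_nonsing_inv _ hR, one_mul]
  have hRH : (Rᴴ)⁻¹ * Rᴴ = 1 := Matrix.nonsing_inv_mul _ hR'
  have hMinv : (Aᴴ * A + Bᴴ * B)⁻¹ = R⁻¹ * (Rᴴ)⁻¹ := by rw [hM, Matrix.mul_inv_rev]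
  have e1 : Bᴴ * Φᴴ * Pm * Φ * B * (Aᴴ * A + Bᴴ * B)⁻¹
      = Rᴴ * (Sigᴴ * (Vᴴ * (Φᴴ * (Pm * (Φ * (V * (Sig * (Rᴴ)⁻¹))))))) := by
    rw [hMinv, hB]
    simp only [Matrix.conjTranspose_mul, Matrix.mul_assoc]
    rw [hRR]
  have e2 : (Matrix.trace (Bᴴ * Φᴴ * Pm * Φ * B * (Aᴴ * A + Bᴴ * B)⁻¹))
      = Matrix.trace (Pm * (U * ((Matrix.diagonal (fun k : Fin p => (Complex.ofReal (β (gmap hpn k)))^2)) * Uᴴ))) := by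
    rw [e1, Matrix.trace_mul_comm]
    have e3 : Sigᴴ * (Vᴴ * (Φᴴ * (Pm * (Φ * (V * (Sig * (Rᴴ)⁻¹)))))) * Rᴴ
        = Sigᴴ * (Vᴴ * (Φᴴ * (Pm * (Φ * (V * Sig))))) := by
      simp only [Matrix.mul_assoc, hRH, Matrix.mul_one]
    rw [e3]
    have e4 : Sigᴴ * (Vᴴ * (Φᴴ * (Pm * (Φ * (V * Sig)))))
        = (Φ * V * Sig)ᴴ * (Pm * (Φ * V * Sig)) := by
      simp only [Matrix.conjTranspose_mul, Matrix.mul_assoc]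
    rw [e4, Matrix.trace_mul_comm]
    have e5 : Pm * (Φ * V * Sig) * (Φ * V * Sig)ᴴ
        = Pm * (U * ((Matrix.diagonal (fun k : Fin p => (Complex.ofReal (β (gmap hpn k)))^2)) * Uᴴ)) := by
      rw [← hD]
      simp only [hUdef, Matrix.conjTranspose_mul, Matrix.mul_assoc]
    rw [e5]
  rw [e2]
  -- now entrywise
  have tr_eq : Matrix.trace (Pm * (U * ((Matrix.diagonal (fun k : Fin p => (Complex.ofReal (β (gmap hpn k)))^2)) * Uᴴ)))
      = ∑ k : Fin p, ∑ j : Fin p, (if t ≤ (k : ℕ) + n then (1:ℂ) else 0) *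
          (U k j * ((Complex.ofReal (β (gmap hpn j)))^2 * star (U k j))) := by
    rw [Matrix.trace]
    apply Finset.sum_congr rfl
    intro k _
    rw [Matrix.diag_apply, Matrix.diagonal_mul, Matrix.mul_apply]
    rw [Finset.mul_sum]
    apply Finset.sum_congr rfl
    intro j _
    rw [Matrix.diagonal_mul, Matrix.conjTranspose_apply]
  rw [tr_eq, Complex.re_sum]
  apply Finset.sum_congr rfl
  intro k _
  rw [Complex.re_sum]
  apply Finset.sum_congr rfl
  intro j _
  have : U k j * ((Complex.ofReal (β (gmap hpn j)))^2 * star (U k j))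
      = Complex.ofReal ((β (gmap hpn j))^2 * Complex.normSq (U k j)) := by
    rw [Complex.ofReal_mul]
    rw [← Complex.mul_conj (U k j)]
    push_cast
    rw [Complex.star_def]
    ring
  rw [this]
  by_cases h : t ≤ (k : ℕ) + n
  · rw [if_pos h, if_pos h, one_mul, one_mul, Complex.ofReal_re]
  · rw [if_neg h, if_neg h, zero_mul, zero_mul, Complex.zero_re]
end


section
variable {m p n : ℕ}

lemma hM_lemma (hpn : p < n)
    (A : Matrix (Fin m) (Fin n) ℂ) (B : Matrix (Fin p) (Fin n) ℂ)
    (V : Matrix (Fin p) (Fin p) ℂ) (hV : V ∈ Matrix.unitaryGroup (Fin p) ℂ)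
    (R : Matrix (Fin n) (Fin n) ℂ)
    (β : Fin n → ℝ)
    (hzero : ∀ k : Fin n, (k : ℕ) + p < n → β k = 0)
    (hB : B = V * (Matrix.of fun (k : Fin p) (l : Fin n) =>
        if (l : ℕ) + p = n + (k : ℕ) then Complex.ofReal (β l) else 0) * R)
    (hAA : Aᴴ * A = Rᴴ * Matrix.diagonal (fun l => Complex.ofReal (1 - β l ^ 2)) * R) :
    Aᴴ * A + Bᴴ * B = Rᴴ * R := by
  set Sig : Matrix (Fin p) (Fin n) ℂ := (Matrix.of fun (k : Fin p) (l : Fin n) =>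
        if (l : ℕ) + p = n + (k : ℕ) then Complex.ofReal (β l) else 0) with hSigdef
  have hVV : Vᴴ * V = 1 := by
    rw [← Matrix.star_eq_conjTranspose]
    exact Matrix.mem_unitaryGroup_iff'.mp hV
  have hBB : Bᴴ * B = Rᴴ * Matrix.diagonal (fun l : Fin n => (Complex.ofReal (β l))^2) * R := by
    rw [hB]
    simp only [Matrix.conjTranspose_mul, Matrix.mul_assoc]
    rw [← Matrix.mul_assoc Vᴴ V, hVV, Matrix.one_mul, ← Matrix.mul_assoc Sigᴴ Sig]
    rw [sigHsig β hzero]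
  rw [hAA, hBB, ← Matrix.add_mul, ← Matrix.mul_add, Matrix.diagonal_add]
  have : (fun l : Fin n => Complex.ofReal (1 - β l ^ 2) + (Complex.ofReal (β l))^2)
      = fun _ => (1:ℂ) := by
    funext l
    push_cast
    ring
  rw [this, Matrix.diagonal_one, Matrix.mul_one]

lemma sup1 (hpn : p < n)
    (A : Matrix (Fin m) (Fin n) ℂ) (B : Matrix (Fin p) (Fin n) ℂ)
    (V : Matrix (Fin p) (Fin p) ℂ) (hV : V ∈ Matrix.unitaryGroup (Fin p) ℂ)
    (R : Matrix (Fin n) (Fin n) ℂ) (hR : IsUnit R.det)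
    (β : Fin n → ℝ)
    (hβ0 : ∀ k, 0 ≤ β k) (hmono : Monotone β)
    (hzero : ∀ k : Fin n, (k : ℕ) + p < n → β k = 0)
    (hB : B = V * (Matrix.of fun (k : Fin p) (l : Fin n) =>
        if (l : ℕ) + p = n + (k : ℕ) then Complex.ofReal (β l) else 0) * R)
    (hAA : Aᴴ * A = Rᴴ * Matrix.diagonal (fun l => Complex.ofReal (1 - β l ^ 2)) * R)
    (t : ℕ) :
    (⨆ Φ : Matrix.unitaryGroup (Fin p) ℂ,
      (Matrix.trace (Bᴴ * (Φ : Matrix (Fin p) (Fin p) ℂ)ᴴ *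
        Matrix.diagonal (fun k : Fin p => if t ≤ (k : ℕ) + n then (1 : ℂ) else 0) *
        (Φ : Matrix (Fin p) (Fin p) ℂ) * B * (Aᴴ * A + Bᴴ * B)⁻¹)).re)
    = ∑ k ∈ Finset.univ.filter (fun k : Fin p => t ≤ (k : ℕ) + n), (β (gmap hpn k))^2 := by
  haveI : Nonempty (Matrix.unitaryGroup (Fin p) ℂ) := ⟨1⟩
  set d : Fin p → ℝ := fun j => (β (gmap hpn j))^2 with hd
  have hM := hM_lemma hpn A B V hV R β hzero hB hAA
  have hD := sigSigH hpn β
  have hd0 : ∀ j, 0 ≤ d j := fun j => sq_nonneg _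
  have hdmono : Monotone d := by
    intro a b hab
    have h1 : β (gmap hpn a) ≤ β (gmap hpn b) := by
      apply hmono
      rw [Fin.le_def, gmap, gmap]
      simp only []
      have := a.isLt; have := b.isLt
      have hab' : (a:ℕ) ≤ (b:ℕ) := hab
      omega
    exact pow_le_pow_left₀ (hβ0 _) h1 2
  have bound : ∀ Φ : Matrix.unitaryGroup (Fin p) ℂ,
      (Matrix.trace (Bᴴ * (Φ : Matrix (Fin p) (Fin p) ℂ)ᴴ *
        Matrix.diagonal (fun k : Fin p => if t ≤ (k : ℕ) + n then (1 : ℂ) else 0) *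
        (Φ : Matrix (Fin p) (Fin p) ℂ) * B * (Aᴴ * A + Bᴴ * B)⁻¹)).re
      ≤ ∑ k ∈ Finset.univ.filter (fun k : Fin p => t ≤ (k : ℕ) + n), d k := by
    rintro ⟨Φ, hΦ⟩
    rw [key1 hpn A B V hV R hR β hB hM hD t Φ hΦ]
    set U : Matrix (Fin p) (Fin p) ℂ := Φ * V with hU
    have hUm : U ∈ Matrix.unitaryGroup (Fin p) ℂ := mul_mem hΦ hV
    set c : Fin p → ℝ := fun j => ∑ k : Fin p, (if t ≤ (k : ℕ) + n then (1:ℝ) else 0) * Complex.normSq (U k j) with hc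
    have swap : ∑ k : Fin p, ∑ j : Fin p, (if t ≤ (k : ℕ) + n then (1:ℝ) else 0) *
        ((β (gmap hpn j))^2 * Complex.normSq (U k j)) = ∑ j, d j * c j := by
      rw [Finset.sum_comm]
      apply Finset.sum_congr rfl
      intro j _
      rw [hc, Finset.mul_sum]
      apply Finset.sum_congr rfl
      intro k _
      ring
    rw [swap]
    apply lemA d c hd0 hdmono (fun k : Fin p => t ≤ (k : ℕ) + n)
    · intro a b ha hab
      have hab' : (a:ℕ) ≤ (b:ℕ) := hab
      omega
    · intro j
      simp only [hc]
      apply Finset.sum_nonneg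
      intro k _
      by_cases h : t ≤ (k : ℕ) + n
      · rw [if_pos h, one_mul]; exact Complex.normSq_nonneg _
      · rw [if_neg h, zero_mul]
    · intro j
      have h1 : c j ≤ ∑ k, Complex.normSq (U k j) := by
        simp only [hc]
        apply Finset.sum_le_sum
        intro k _
        by_cases h : t ≤ (k : ℕ) + n
        · rw [if_pos h, one_mul]
        · rw [if_neg h, zero_mul]; exact Complex.normSq_nonneg _
      rw [unit_col U hUm j] at h1
      exact h1
    · have hsumc : ∑ j, c j = ((Finset.univ.filter (fun k : Fin p => t ≤ (k : ℕ) + n)).card : ℝ) := by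
        rw [hc]
        rw [Finset.sum_comm]
        have : ∀ k : Fin p, ∑ j, (if t ≤ (k : ℕ) + n then (1:ℝ) else 0) * Complex.normSq (U k j)
            = if t ≤ (k : ℕ) + n then (1:ℝ) else 0 := by
          intro k
          rw [← Finset.mul_sum, unit_row U hUm k, mul_one]
        rw [Finset.sum_congr rfl (fun k _ => this k), Finset.sum_boole]
      rw [hsumc]
  have attain : (Matrix.trace (Bᴴ * ((⟨star V, Unitary.star_mem hV⟩ : Matrix.unitaryGroup (Fin p) ℂ) : Matrix (Fin p) (Fin p) ℂ)ᴴ *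
        Matrix.diagonal (fun k : Fin p => if t ≤ (k : ℕ) + n then (1 : ℂ) else 0) *
        ((⟨star V, Unitary.star_mem hV⟩ : Matrix.unitaryGroup (Fin p) ℂ) : Matrix (Fin p) (Fin p) ℂ) * B * (Aᴴ * A + Bᴴ * B)⁻¹)).re
      = ∑ k ∈ Finset.univ.filter (fun k : Fin p => t ≤ (k : ℕ) + n), d k := by
    rw [key1 hpn A B V hV R hR β hB hM hD t (star V) (Unitary.star_mem hV)]
    have hUone : star V * V = 1 := Matrix.mem_unitaryGroup_iff'.mp hV
    rw [hUone]
    have inner : ∀ k : Fin p, ∑ j : Fin p, (if t ≤ (k : ℕ) + n then (1:ℝ) else 0) *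
        ((β (gmap hpn j))^2 * Complex.normSq ((1 : Matrix (Fin p) (Fin p) ℂ) k j))
        = (if t ≤ (k : ℕ) + n then (1:ℝ) else 0) * d k := by
      intro k
      rw [Finset.sum_eq_single k]
      · rw [Matrix.one_apply_eq]
        simp [hd]
      · intro j _ hj
        rw [Matrix.one_apply_ne' hj]
        simp
      · intro h; exact absurd (Finset.mem_univ _) h
    rw [Finset.sum_congr rfl (fun k _ => inner k)]
    rw [Finset.sum_filter]
    apply Finset.sum_congr rfl
    intro k _
    by_cases h : t ≤ (k : ℕ) + n
    · rw [if_pos h, if_pos h, one_mul]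
    · rw [if_neg h, if_neg h, zero_mul]
  apply le_antisymm
  · exact ciSup_le bound
  · have hbdd : BddAbove (Set.range (fun Φ : Matrix.unitaryGroup (Fin p) ℂ =>
      (Matrix.trace (Bᴴ * (Φ : Matrix (Fin p) (Fin p) ℂ)ᴴ *
        Matrix.diagonal (fun k : Fin p => if t ≤ (k : ℕ) + n then (1 : ℂ) else 0) *
        (Φ : Matrix (Fin p) (Fin p) ℂ) * B * (Aᴴ * A + Bᴴ * B)⁻¹)).re)) := by
      refine ⟨∑ k ∈ Finset.univ.filter (fun k : Fin p => t ≤ (k : ℕ) + n), d k, ?_⟩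
      rintro x ⟨Φ, rfl⟩
      exact bound Φ
    calc ∑ k ∈ Finset.univ.filter (fun k : Fin p => t ≤ (k : ℕ) + n), (β (gmap hpn k))^2
        = _ := attain.symm
      _ ≤ _ := le_ciSup hbdd (⟨star V, Unitary.star_mem hV⟩ : Matrix.unitaryGroup (Fin p) ℂ)
end

section
variable {m p n : ℕ}

lemma key2 (hpn : p < n)
    (B : Matrix (Fin p) (Fin n) ℂ)
    (V : Matrix (Fin p) (Fin p) ℂ)
    (R : Matrix (Fin n) (Fin n) ℂ)
    (β : Fin n → ℝ)
    (hB : B = V * (Matrix.of fun (k : Fin p) (l : Fin n) =>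
        if (l : ℕ) + p = n + (k : ℕ) then Complex.ofReal (β l) else 0) * R)
    (S : Matrix (Fin n) (Fin n) ℂ)
    (t : ℕ) (X3 : Matrix (Fin n) (Fin n) ℂ) (X4 : Matrix (Fin p) (Fin p) ℂ) :
    Matrix.trace (X3 * S⁻¹ * Bᴴ * X4 *
      Matrix.of (fun (k : Fin p) (l : Fin n) =>
        if (l : ℕ) + p = n + (k : ℕ) ∧ t ≤ (k : ℕ) + n then (1 : ℂ) else 0))
    = ∑ k : Fin p, Complex.ofReal (β (gmap hpn k)) *
        (∑ k' : Fin p, if t ≤ (k' : ℕ) + n then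
          (Vᴴ * X4) k k' * ((X3 * (S⁻¹ * Rᴴ)) (gmap hpn k') (gmap hpn k)) else 0) := by
  set Sig : Matrix (Fin p) (Fin n) ℂ := (Matrix.of fun (k : Fin p) (l : Fin n) =>
        if (l : ℕ) + p = n + (k : ℕ) then Complex.ofReal (β l) else 0) with hSigdef
  set W : Matrix (Fin p) (Fin n) ℂ := Matrix.of (fun (k : Fin p) (l : Fin n) =>
        if (l : ℕ) + p = n + (k : ℕ) ∧ t ≤ (k : ℕ) + n then (1 : ℂ) else 0) with hWdef
  set Y : Matrix (Fin n) (Fin n) ℂ := X3 * (S⁻¹ * Rᴴ) with hYdef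
  set Z : Matrix (Fin p) (Fin p) ℂ := Vᴴ * X4 with hZdef
  have e1 : X3 * S⁻¹ * Bᴴ * X4 * W = Y * (Sigᴴ * (Z * W)) := by
    rw [hYdef, hZdef, hB]
    simp only [Matrix.conjTranspose_mul, Matrix.mul_assoc]
  rw [e1, Matrix.trace_mul_comm]
  have e2 : Sigᴴ * (Z * W) * Y = Sigᴴ * (Z * (W * Y)) := by
    simp only [Matrix.mul_assoc]
  rw [e2]
  set N : Matrix (Fin p) (Fin n) ℂ := Z * (W * Y) with hNdef
  have hN : ∀ (k : Fin p) (l : Fin n), N k l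
      = ∑ k' : Fin p, if t ≤ (k' : ℕ) + n then Z k k' * Y (gmap hpn k') l else 0 := by
    intro k l
    rw [hNdef, Matrix.mul_apply]
    apply Finset.sum_congr rfl
    intro k' _
    have hWY : (W * Y) k' l = if t ≤ (k' : ℕ) + n then Y (gmap hpn k') l else 0 := by
      rw [Matrix.mul_apply]
      by_cases ht : t ≤ (k' : ℕ) + n
      · rw [if_pos ht, Finset.sum_eq_single (gmap hpn k')]
        · rw [hWdef]
          have : ((gmap hpn k' : Fin n) : ℕ) + p = n + (k' : ℕ) := by
            rw [gmap_coe]; omega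
          rw [Matrix.of_apply, if_pos ⟨this, ht⟩, one_mul]
        · intro l' _ hl'
          rw [hWdef, Matrix.of_apply, if_neg, zero_mul]
          rintro ⟨h1, -⟩
          exact hl' (Fin.ext (by rw [gmap_coe]; omega))
        · intro h; exact absurd (Finset.mem_univ _) h
      · rw [if_neg ht]
        apply Finset.sum_eq_zero
        intro l' _
        rw [hWdef, Matrix.of_apply, if_neg, zero_mul]
        rintro ⟨-, h2⟩
        exact ht h2
    rw [hWY]
    by_cases ht : t ≤ (k' : ℕ) + n
    · rw [if_pos ht, if_pos ht]
    · rw [if_neg ht, if_neg ht, mul_zero]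
  -- trace (Sigᴴ * N)
  rw [Matrix.trace]
  have e3 : ∀ l : Fin n, (Sigᴴ * N).diag l = ∑ k : Fin p,
      (if (l : ℕ) + p = n + (k : ℕ) then Complex.ofReal (β l) else 0) * N k l := by
    intro l
    rw [Matrix.diag_apply, Matrix.mul_apply]
    apply Finset.sum_congr rfl
    intro k _
    have hstar : (Sigᴴ) l k = (if (l : ℕ) + p = n + (k : ℕ) then Complex.ofReal (β l) else 0) := by
      rw [Matrix.conjTranspose_apply, hSigdef, Matrix.of_apply]
      split_ifs <;> simp [Complex.star_def, Complex.conj_ofReal]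
    rw [hstar]
  rw [Finset.sum_congr rfl (fun l _ => e3 l), Finset.sum_comm]
  apply Finset.sum_congr rfl
  intro k _
  rw [Finset.sum_eq_single (gmap hpn k)]
  · have hg : ((gmap hpn k : Fin n) : ℕ) + p = n + (k : ℕ) := by rw [gmap_coe]; omega
    rw [if_pos hg, hN]
  · intro l _ hl
    rw [if_neg, zero_mul]
    intro h
    exact hl (Fin.ext (by rw [gmap_coe]; omega))
  · intro h; exact absurd (Finset.mem_univ _) h
end

section
variable {m p n : ℕ}

lemma sum_g_col_le (hpn : p < n) (Y : Matrix (Fin n) (Fin n) ℂ)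
    (hY : Y ∈ Matrix.unitaryGroup (Fin n) ℂ) (c : Fin n) :
    ∑ k : Fin p, Complex.normSq (Y (gmap hpn k) c) ≤ 1 := by
  have himg : ∑ l ∈ Finset.univ.image (gmap hpn), Complex.normSq (Y l c)
      = ∑ k : Fin p, Complex.normSq (Y (gmap hpn k) c) :=
    Finset.sum_image (fun a _ b _ h => gmap_inj hpn h)
  rw [← himg]
  have h2 : ∑ l ∈ Finset.univ.image (gmap hpn), Complex.normSq (Y l c)
      ≤ ∑ l : Fin n, Complex.normSq (Y l c) :=
    Finset.sum_le_sum_of_subset_of_nonneg (Finset.subset_univ _)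
      (fun l _ _ => Complex.normSq_nonneg _)
  rw [unit_col Y hY c] at h2
  exact h2

lemma sum_g_row_le (hpn : p < n) (Y : Matrix (Fin n) (Fin n) ℂ)
    (hY : Y ∈ Matrix.unitaryGroup (Fin n) ℂ) (r : Fin n) :
    ∑ k : Fin p, Complex.normSq (Y r (gmap hpn k)) ≤ 1 := by
  have himg : ∑ l ∈ Finset.univ.image (gmap hpn), Complex.normSq (Y r l)
      = ∑ k : Fin p, Complex.normSq (Y r (gmap hpn k)) :=
    Finset.sum_image (fun a _ b _ h => gmap_inj hpn h)
  rw [← himg]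
  have h2 : ∑ l ∈ Finset.univ.image (gmap hpn), Complex.normSq (Y r l)
      ≤ ∑ l : Fin n, Complex.normSq (Y r l) :=
    Finset.sum_le_sum_of_subset_of_nonneg (Finset.subset_univ _)
      (fun l _ _ => Complex.normSq_nonneg _)
  rw [unit_row Y hY r] at h2
  exact h2

lemma sup2 (hpn : p < n)
    (A : Matrix (Fin m) (Fin n) ℂ) (B : Matrix (Fin p) (Fin n) ℂ)
    (V : Matrix (Fin p) (Fin p) ℂ) (hV : V ∈ Matrix.unitaryGroup (Fin p) ℂ)
    (R : Matrix (Fin n) (Fin n) ℂ) (hR : IsUnit R.det)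
    (β : Fin n → ℝ)
    (hβ0 : ∀ k, 0 ≤ β k) (hmono : Monotone β)
    (hzero : ∀ k : Fin n, (k : ℕ) + p < n → β k = 0)
    (hB : B = V * (Matrix.of fun (k : Fin p) (l : Fin n) =>
        if (l : ℕ) + p = n + (k : ℕ) then Complex.ofReal (β l) else 0) * R)
    (hAA : Aᴴ * A = Rᴴ * Matrix.diagonal (fun l => Complex.ofReal (1 - β l ^ 2)) * R)
    (S : Matrix (Fin n) (Fin n) ℂ) (hS : S.PosDef)
    (hSsq : S * S = Aᴴ * A + Bᴴ * B)
    (t : ℕ) :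
    (⨆ X3 : Matrix.unitaryGroup (Fin n) ℂ, ⨆ X4 : Matrix.unitaryGroup (Fin p) ℂ,
      Norm.norm (Matrix.trace ((X3 : Matrix (Fin n) (Fin n) ℂ) * S⁻¹ * Bᴴ *
        (X4 : Matrix (Fin p) (Fin p) ℂ) *
        Matrix.of (fun (k : Fin p) (l : Fin n) =>
          if (l : ℕ) + p = n + (k : ℕ) ∧ t ≤ (k : ℕ) + n then (1 : ℂ) else 0))))
    = ∑ k ∈ Finset.univ.filter (fun k : Fin p => t ≤ (k : ℕ) + n), β (gmap hpn k) := by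
  haveI : Nonempty (Matrix.unitaryGroup (Fin p) ℂ) := ⟨1⟩
  haveI : Nonempty (Matrix.unitaryGroup (Fin n) ℂ) := ⟨1⟩
  have hM := hM_lemma hpn A B V hV R β hzero hB hAA
  have hS2 : S * S = Rᴴ * R := hSsq.trans hM
  have hSH : Sᴴ = S := hS.1
  have hSdet : IsUnit S.det := hS.det_pos.ne'.isUnit
  have hQ : S⁻¹ * Rᴴ ∈ Matrix.unitaryGroup (Fin n) ℂ := by
    rw [Matrix.mem_unitaryGroup_iff, Matrix.star_eq_conjTranspose,
      Matrix.conjTranspose_mul, Matrix.conjTranspose_conjTranspose,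
      Matrix.conjTranspose_nonsing_inv, hSH]
    have h1 : Rᴴ * (R * S⁻¹) = S := by
      rw [← Matrix.mul_assoc, ← hS2, Matrix.mul_assoc, Matrix.mul_nonsing_inv _ hSdet,
        Matrix.mul_one]
    rw [Matrix.mul_assoc, h1, Matrix.nonsing_inv_mul _ hSdet]
  have hVV : Vᴴ * V = 1 := by
    rw [← Matrix.star_eq_conjTranspose]
    exact Matrix.mem_unitaryGroup_iff'.mp hV
  have hd0 : ∀ j : Fin p, 0 ≤ β (gmap hpn j) := fun j => hβ0 _
  have hdmono : Monotone (fun j : Fin p => β (gmap hpn j)) := by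
    intro a b hab
    apply hmono
    rw [Fin.le_def, gmap_coe, gmap_coe]
    have hab' : (a:ℕ) ≤ (b:ℕ) := hab
    omega
  have bound : ∀ (X3 : Matrix (Fin n) (Fin n) ℂ), X3 ∈ Matrix.unitaryGroup (Fin n) ℂ →
      ∀ (X4 : Matrix (Fin p) (Fin p) ℂ), X4 ∈ Matrix.unitaryGroup (Fin p) ℂ →
      Norm.norm (Matrix.trace (X3 * S⁻¹ * Bᴴ * X4 *
        Matrix.of (fun (k : Fin p) (l : Fin n) =>
          if (l : ℕ) + p = n + (k : ℕ) ∧ t ≤ (k : ℕ) + n then (1 : ℂ) else 0)))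
      ≤ ∑ k ∈ Finset.univ.filter (fun k : Fin p => t ≤ (k : ℕ) + n), β (gmap hpn k) := by
    intro X3 h3 X4 h4
    rw [key2 hpn B V R β hB S t X3 X4]
    have hYu : X3 * (S⁻¹ * Rᴴ) ∈ Matrix.unitaryGroup (Fin n) ℂ := mul_mem h3 hQ
    have hZu : Vᴴ * X4 ∈ Matrix.unitaryGroup (Fin p) ℂ := by
      rw [← Matrix.star_eq_conjTranspose]
      exact mul_mem (Unitary.star_mem hV) h4
    set Y : Matrix (Fin n) (Fin n) ℂ := X3 * (S⁻¹ * Rᴴ) with hY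
    set Z : Matrix (Fin p) (Fin p) ℂ := Vᴴ * X4 with hZ
    set e : Fin p → ℝ := fun k =>
      (∑ k' : Fin p, (if t ≤ (k' : ℕ) + n then Complex.normSq (Z k k') else 0))/2 +
      (∑ k' : Fin p, (if t ≤ (k' : ℕ) + n then Complex.normSq (Y (gmap hpn k') (gmap hpn k)) else 0))/2 with he
    have habs : Norm.norm (∑ k : Fin p, Complex.ofReal (β (gmap hpn k)) *
        (∑ k' : Fin p, if t ≤ (k' : ℕ) + n then Z k k' * (Y (gmap hpn k') (gmap hpn k)) else 0))
        ≤ ∑ k : Fin p, β (gmap hpn k) * e k := by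
      refine le_trans (norm_sum_le _ _) ?_
      apply Finset.sum_le_sum
      intro k _
      rw [norm_mul, Complex.norm_real, Real.norm_eq_abs, abs_of_nonneg (hβ0 _)]
      have inner : Norm.norm (∑ k' : Fin p, if t ≤ (k' : ℕ) + n then
          Z k k' * (Y (gmap hpn k') (gmap hpn k)) else 0) ≤ e k := by
        refine le_trans (norm_sum_le _ _) ?_
        have hterm : ∀ k' : Fin p, Norm.norm (if t ≤ (k' : ℕ) + n then
            Z k k' * (Y (gmap hpn k') (gmap hpn k)) else 0)
            ≤ (if t ≤ (k' : ℕ) + n then Complex.normSq (Z k k') else 0)/2 +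
              (if t ≤ (k' : ℕ) + n then Complex.normSq (Y (gmap hpn k') (gmap hpn k)) else 0)/2 := by
          intro k'
          by_cases ht : t ≤ (k' : ℕ) + n
          · rw [if_pos ht, if_pos ht, if_pos ht, norm_mul]
            have h1 := Complex.sq_norm (Z k k')
            have h2 := Complex.sq_norm (Y (gmap hpn k') (gmap hpn k))
            have h3 := norm_nonneg (Z k k')
            have h4 := norm_nonneg (Y (gmap hpn k') (gmap hpn k))
            nlinarith [sq_nonneg (Norm.norm (Z k k') - Norm.norm (Y (gmap hpn k') (gmap hpn k)))]
          · rw [if_neg ht, if_neg ht, if_neg ht, norm_zero]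
            norm_num
        refine le_trans (Finset.sum_le_sum (fun k' _ => hterm k')) ?_
        rw [he]
        simp only []
        rw [Finset.sum_add_distrib, Finset.sum_div, Finset.sum_div]
      exact mul_le_mul_of_nonneg_left inner (hβ0 _)
    refine le_trans habs ?_
    apply lemA _ e hd0 hdmono (fun k : Fin p => t ≤ (k : ℕ) + n)
    · intro a b ha hab
      have hab' : (a:ℕ) ≤ (b:ℕ) := hab
      omega
    · intro k
      simp only [he]
      have n1 : (0:ℝ) ≤ ∑ k' : Fin p, (if t ≤ (k' : ℕ) + n then Complex.normSq (Z k k') else 0) :=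
        Finset.sum_nonneg (fun k' _ => by split_ifs; exacts [Complex.normSq_nonneg _, le_refl 0])
      have n2 : (0:ℝ) ≤ ∑ k' : Fin p, (if t ≤ (k' : ℕ) + n then Complex.normSq (Y (gmap hpn k') (gmap hpn k)) else 0) :=
        Finset.sum_nonneg (fun k' _ => by split_ifs; exacts [Complex.normSq_nonneg _, le_refl 0])
      linarith
    · intro k
      simp only [he]
      have n1 : ∑ k' : Fin p, (if t ≤ (k' : ℕ) + n then Complex.normSq (Z k k') else 0) ≤ 1 := by
        have : ∑ k' : Fin p, (if t ≤ (k' : ℕ) + n then Complex.normSq (Z k k') else 0)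
            ≤ ∑ k' : Fin p, Complex.normSq (Z k k') := by
          apply Finset.sum_le_sum
          intro k' _
          split_ifs
          · exact le_refl _
          · exact Complex.normSq_nonneg _
        rw [unit_row Z hZu k] at this
        exact this
      have n2 : ∑ k' : Fin p, (if t ≤ (k' : ℕ) + n then Complex.normSq (Y (gmap hpn k') (gmap hpn k)) else 0) ≤ 1 := by
        have h5 : ∑ k' : Fin p, (if t ≤ (k' : ℕ) + n then Complex.normSq (Y (gmap hpn k') (gmap hpn k)) else 0)
            ≤ ∑ k' : Fin p, Complex.normSq (Y (gmap hpn k') (gmap hpn k)) := by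
          apply Finset.sum_le_sum
          intro k' _
          split_ifs
          · exact le_refl _
          · exact Complex.normSq_nonneg _
        exact le_trans h5 (sum_g_col_le hpn Y hYu (gmap hpn k))
      linarith
    · -- sum e ≤ card
      simp only [he]
      rw [Finset.sum_add_distrib]
      have n1 : ∑ k : Fin p, (∑ k' : Fin p, (if t ≤ (k' : ℕ) + n then Complex.normSq (Z k k') else 0))/2
          = ((Finset.univ.filter (fun k : Fin p => t ≤ (k : ℕ) + n)).card : ℝ)/2 := by
        rw [← Finset.sum_div]
        congr 1
        rw [Finset.sum_comm]
        have : ∀ k' : Fin p, ∑ k : Fin p, (if t ≤ (k' : ℕ) + n then Complex.normSq (Z k k') else 0)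
            = if t ≤ (k' : ℕ) + n then (1:ℝ) else 0 := by
          intro k'
          by_cases ht : t ≤ (k' : ℕ) + n
          · simp only [if_pos ht]
            exact unit_col Z hZu k'
          · simp only [if_neg ht]
            exact Finset.sum_const_zero
        rw [Finset.sum_congr rfl (fun k' _ => this k'), Finset.sum_boole]
      have n2 : ∑ k : Fin p, (∑ k' : Fin p, (if t ≤ (k' : ℕ) + n then Complex.normSq (Y (gmap hpn k') (gmap hpn k)) else 0))/2
          ≤ ((Finset.univ.filter (fun k : Fin p => t ≤ (k : ℕ) + n)).card : ℝ)/2 := by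
        rw [← Finset.sum_div]
        have hnum : ∑ k : Fin p, ∑ k' : Fin p, (if t ≤ (k' : ℕ) + n then Complex.normSq (Y (gmap hpn k') (gmap hpn k)) else 0)
            ≤ ((Finset.univ.filter (fun k : Fin p => t ≤ (k : ℕ) + n)).card : ℝ) := by
          rw [Finset.sum_comm]
          have hterm2 : ∀ k' : Fin p, ∑ k : Fin p, (if t ≤ (k' : ℕ) + n then Complex.normSq (Y (gmap hpn k') (gmap hpn k)) else 0)
              ≤ if t ≤ (k' : ℕ) + n then (1:ℝ) else 0 := by
            intro k'
            by_cases ht : t ≤ (k' : ℕ) + n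
            · simp only [if_pos ht]
              exact sum_g_row_le hpn Y hYu (gmap hpn k')
            · simp only [if_neg ht]
              rw [Finset.sum_const_zero]
          refine le_trans (Finset.sum_le_sum (fun k' _ => hterm2 k')) ?_
          rw [Finset.sum_boole]
        linarith
      linarith
  have hQQ : star (S⁻¹ * Rᴴ) * (S⁻¹ * Rᴴ) = 1 := Matrix.mem_unitaryGroup_iff'.mp hQ
  have attain : Norm.norm (Matrix.trace ((star (S⁻¹ * Rᴴ)) * S⁻¹ * Bᴴ * V *
        Matrix.of (fun (k : Fin p) (l : Fin n) =>
          if (l : ℕ) + p = n + (k : ℕ) ∧ t ≤ (k : ℕ) + n then (1 : ℂ) else 0)))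
      = ∑ k ∈ Finset.univ.filter (fun k : Fin p => t ≤ (k : ℕ) + n), β (gmap hpn k) := by
    rw [key2 hpn B V R β hB S t (star (S⁻¹ * Rᴴ)) V]
    rw [hVV, hQQ]
    have hinner : ∀ k : Fin p, (∑ k' : Fin p, if t ≤ (k' : ℕ) + n then
        (1 : Matrix (Fin p) (Fin p) ℂ) k k' *
        ((1 : Matrix (Fin n) (Fin n) ℂ) (gmap hpn k') (gmap hpn k)) else 0)
        = if t ≤ (k : ℕ) + n then (1:ℂ) else 0 := by
      intro k
      rw [Finset.sum_eq_single k]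
      · by_cases ht : t ≤ (k : ℕ) + n
        · rw [if_pos ht, if_pos ht, Matrix.one_apply_eq, Matrix.one_apply_eq, one_mul]
        · rw [if_neg ht, if_neg ht]
      · intro k' _ hk'
        by_cases ht : t ≤ (k' : ℕ) + n
        · rw [if_pos ht, Matrix.one_apply_ne (Ne.symm hk'), zero_mul]
        · rw [if_neg ht]
      · intro h; exact absurd (Finset.mem_univ _) h
    simp only [hinner]
    have hsum : (∑ k : Fin p, Complex.ofReal (β (gmap hpn k)) * (if t ≤ (k : ℕ) + n then (1:ℂ) else 0))
        = Complex.ofReal (∑ k ∈ Finset.univ.filter (fun k : Fin p => t ≤ (k : ℕ) + n), β (gmap hpn k)) := by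
      rw [Finset.sum_filter, Complex.ofReal_sum]
      apply Finset.sum_congr rfl
      intro k _
      by_cases ht : t ≤ (k : ℕ) + n
      · rw [if_pos ht, if_pos ht, mul_one]
      · rw [if_neg ht, if_neg ht, mul_zero, Complex.ofReal_zero]
    rw [hsum, Complex.norm_real, Real.norm_eq_abs, abs_of_nonneg]
    exact Finset.sum_nonneg (fun k _ => hβ0 _)
  apply le_antisymm
  · exact ciSup_le fun X3 => ciSup_le fun X4 => bound X3 X3.2 X4 X4.2
  · have hinbdd : BddAbove (Set.range (fun X4 : Matrix.unitaryGroup (Fin p) ℂ =>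
      Norm.norm (Matrix.trace (((⟨star (S⁻¹ * Rᴴ), Unitary.star_mem hQ⟩ : Matrix.unitaryGroup (Fin n) ℂ) : Matrix (Fin n) (Fin n) ℂ) * S⁻¹ * Bᴴ *
        (X4 : Matrix (Fin p) (Fin p) ℂ) *
        Matrix.of (fun (k : Fin p) (l : Fin n) =>
          if (l : ℕ) + p = n + (k : ℕ) ∧ t ≤ (k : ℕ) + n then (1 : ℂ) else 0))))) := by
      refine ⟨∑ k ∈ Finset.univ.filter (fun k : Fin p => t ≤ (k : ℕ) + n), β (gmap hpn k), ?_⟩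
      rintro x ⟨X4, rfl⟩
      exact bound _ (Unitary.star_mem hQ) X4 X4.2
    have houtbdd : BddAbove (Set.range (fun X3 : Matrix.unitaryGroup (Fin n) ℂ =>
      ⨆ X4 : Matrix.unitaryGroup (Fin p) ℂ,
      Norm.norm (Matrix.trace ((X3 : Matrix (Fin n) (Fin n) ℂ) * S⁻¹ * Bᴴ *
        (X4 : Matrix (Fin p) (Fin p) ℂ) *
        Matrix.of (fun (k : Fin p) (l : Fin n) =>
          if (l : ℕ) + p = n + (k : ℕ) ∧ t ≤ (k : ℕ) + n then (1 : ℂ) else 0))))) := by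
      refine ⟨∑ k ∈ Finset.univ.filter (fun k : Fin p => t ≤ (k : ℕ) + n), β (gmap hpn k), ?_⟩
      rintro x ⟨X3, rfl⟩
      exact ciSup_le fun X4 => bound X3 X3.2 X4 X4.2
    have step1 : (∑ k ∈ Finset.univ.filter (fun k : Fin p => t ≤ (k : ℕ) + n), β (gmap hpn k))
        ≤ ⨆ X4 : Matrix.unitaryGroup (Fin p) ℂ,
          Norm.norm (Matrix.trace (((⟨star (S⁻¹ * Rᴴ), Unitary.star_mem hQ⟩ : Matrix.unitaryGroup (Fin n) ℂ) : Matrix (Fin n) (Fin n) ℂ) * S⁻¹ * Bᴴ *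
            (X4 : Matrix (Fin p) (Fin p) ℂ) *
            Matrix.of (fun (k : Fin p) (l : Fin n) =>
              if (l : ℕ) + p = n + (k : ℕ) ∧ t ≤ (k : ℕ) + n then (1 : ℂ) else 0))) := by
      refine le_trans (le_of_eq attain.symm) ?_
      exact le_ciSup hinbdd (⟨V, hV⟩ : Matrix.unitaryGroup (Fin p) ℂ)
    exact le_trans step1 (le_ciSup houtbdd (⟨star (S⁻¹ * Rᴴ), Unitary.star_mem hQ⟩ : Matrix.unitaryGroup (Fin n) ℂ))
end

lemma tele {p n : ℕ} (f : Fin p → ℝ) (τ : ℕ) (k₀ : Fin p) (hk : (k₀ : ℕ) + n = τ) :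
    ∑ k ∈ Finset.univ.filter (fun k : Fin p => τ ≤ (k : ℕ) + n), f k
    - ∑ k ∈ Finset.univ.filter (fun k : Fin p => τ + 1 ≤ (k : ℕ) + n), f k
    = f k₀ := by
  have hins : Finset.univ.filter (fun k : Fin p => τ ≤ (k : ℕ) + n)
      = insert k₀ (Finset.univ.filter (fun k : Fin p => τ + 1 ≤ (k : ℕ) + n)) := by
    ext k
    simp only [Finset.mem_filter, Finset.mem_insert, Finset.mem_univ, true_and, Fin.ext_iff]
    omega
  have hnot : k₀ ∉ Finset.univ.filter (fun k : Fin p => τ + 1 ≤ (k : ℕ) + n) := by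
    simp only [Finset.mem_filter, Finset.mem_univ, true_and]
    omega
  rw [hins, Finset.sum_insert hnot]
  ring


theorem stmt19
    {m p n : ℕ} (hpn : p < n)
    (A : Matrix (Fin m) (Fin n) ℂ) (B : Matrix (Fin p) (Fin n) ℂ)
    (hrank : (Matrix.fromRows A B).rank = n)
    (V : Matrix (Fin p) (Fin p) ℂ) (hV : V ∈ Matrix.unitaryGroup (Fin p) ℂ)
    (R : Matrix (Fin n) (Fin n) ℂ) (hR : IsUnit R.det)
    (β : Fin n → ℝ)
    (hβ0 : ∀ k, 0 ≤ β k) (hβ1 : ∀ k, β k ≤ 1) (hmono : Monotone β)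
    (hzero : ∀ k : Fin n, (k : ℕ) + p < n → β k = 0)
    (hB : B = V * (Matrix.of fun (k : Fin p) (l : Fin n) =>
        if (l : ℕ) + p = n + (k : ℕ) then Complex.ofReal (β l) else 0) * R)
    (hAA : Aᴴ * A = Rᴴ * Matrix.diagonal (fun l => Complex.ofReal (1 - β l ^ 2)) * R)
    (S : Matrix (Fin n) (Fin n) ℂ) (hS : S.PosDef)
    (hSsq : S * S = Aᴴ * A + Bᴴ * B)
 :
    ((n - p < n / 2 →
      ∀ i : Fin n, n / 2 ≤ (i : ℕ) →
        (β i ^ 2 =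
(⨆ Φ : Matrix.unitaryGroup (Fin p) ℂ,
      (Matrix.trace (Bᴴ * (Φ : Matrix (Fin p) (Fin p) ℂ)ᴴ *
        Matrix.diagonal (fun k : Fin p => if p + (i : ℕ) ≤ (k : ℕ) + n then (1 : ℂ) else 0) *
        (Φ : Matrix (Fin p) (Fin p) ℂ) * B * (Aᴴ * A + Bᴴ * B)⁻¹)).re) -
(⨆ Φ : Matrix.unitaryGroup (Fin p) ℂ,
      (Matrix.trace (Bᴴ * (Φ : Matrix (Fin p) (Fin p) ℂ)ᴴ *
        Matrix.diagonal (fun k : Fin p => if p + (i : ℕ) + 1 ≤ (k : ℕ) + n then (1 : ℂ) else 0) *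
        (Φ : Matrix (Fin p) (Fin p) ℂ) * B * (Aᴴ * A + Bᴴ * B)⁻¹)).re)) ∧
        (β i =
(⨆ X3 : Matrix.unitaryGroup (Fin n) ℂ, ⨆ X4 : Matrix.unitaryGroup (Fin p) ℂ,
      Norm.norm (Matrix.trace ((X3 : Matrix (Fin n) (Fin n) ℂ) * S⁻¹ * Bᴴ *
        (X4 : Matrix (Fin p) (Fin p) ℂ) *
        Matrix.of (fun (k : Fin p) (l : Fin n) =>
          if (l : ℕ) + p = n + (k : ℕ) ∧ p + (i : ℕ) ≤ (k : ℕ) + n then (1 : ℂ) else 0)))) -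
(⨆ X3 : Matrix.unitaryGroup (Fin n) ℂ, ⨆ X4 : Matrix.unitaryGroup (Fin p) ℂ,
      Norm.norm (Matrix.trace ((X3 : Matrix (Fin n) (Fin n) ℂ) * S⁻¹ * Bᴴ *
        (X4 : Matrix (Fin p) (Fin p) ℂ) *
        Matrix.of (fun (k : Fin p) (l : Fin n) =>
          if (l : ℕ) + p = n + (k : ℕ) ∧ p + (i : ℕ) + 1 ≤ (k : ℕ) + n then (1 : ℂ) else 0)))))) ∧
     (n / 2 < n - p →
      (∀ k : Fin n, n / 2 ≤ (k : ℕ) → (k : ℕ) + p < n → β k = 0) ∧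
      ∀ i : Fin n, n ≤ p + (i : ℕ) →
        (β i ^ 2 =
(⨆ Φ : Matrix.unitaryGroup (Fin p) ℂ,
      (Matrix.trace (Bᴴ * (Φ : Matrix (Fin p) (Fin p) ℂ)ᴴ *
        Matrix.diagonal (fun k : Fin p => if p + (i : ℕ) ≤ (k : ℕ) + n then (1 : ℂ) else 0) *
        (Φ : Matrix (Fin p) (Fin p) ℂ) * B * (Aᴴ * A + Bᴴ * B)⁻¹)).re) -
(⨆ Φ : Matrix.unitaryGroup (Fin p) ℂ,
      (Matrix.trace (Bᴴ * (Φ : Matrix (Fin p) (Fin p) ℂ)ᴴ *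
        Matrix.diagonal (fun k : Fin p => if p + (i : ℕ) + 1 ≤ (k : ℕ) + n then (1 : ℂ) else 0) *
        (Φ : Matrix (Fin p) (Fin p) ℂ) * B * (Aᴴ * A + Bᴴ * B)⁻¹)).re)) ∧
        (β i =
(⨆ X3 : Matrix.unitaryGroup (Fin n) ℂ, ⨆ X4 : Matrix.unitaryGroup (Fin p) ℂ,
      Norm.norm (Matrix.trace ((X3 : Matrix (Fin n) (Fin n) ℂ) * S⁻¹ * Bᴴ *
        (X4 : Matrix (Fin p) (Fin p) ℂ) *
        Matrix.of (fun (k : Fin p) (l : Fin n) =>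
          if (l : ℕ) + p = n + (k : ℕ) ∧ p + (i : ℕ) ≤ (k : ℕ) + n then (1 : ℂ) else 0)))) -
(⨆ X3 : Matrix.unitaryGroup (Fin n) ℂ, ⨆ X4 : Matrix.unitaryGroup (Fin p) ℂ,
      Norm.norm (Matrix.trace ((X3 : Matrix (Fin n) (Fin n) ℂ) * S⁻¹ * Bᴴ *
        (X4 : Matrix (Fin p) (Fin p) ℂ) *
        Matrix.of (fun (k : Fin p) (l : Fin n) =>
          if (l : ℕ) + p = n + (k : ℕ) ∧ p + (i : ℕ) + 1 ≤ (k : ℕ) + n then (1 : ℂ) else 0))))))) := by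
  have main : ∀ i : Fin n, n ≤ p + (i : ℕ) →
      (β i ^ 2 =
        (⨆ Φ : Matrix.unitaryGroup (Fin p) ℂ,
          (Matrix.trace (Bᴴ * (Φ : Matrix (Fin p) (Fin p) ℂ)ᴴ *
            Matrix.diagonal (fun k : Fin p => if p + (i : ℕ) ≤ (k : ℕ) + n then (1 : ℂ) else 0) *
            (Φ : Matrix (Fin p) (Fin p) ℂ) * B * (Aᴴ * A + Bᴴ * B)⁻¹)).re) -
        (⨆ Φ : Matrix.unitaryGroup (Fin p) ℂ,
          (Matrix.trace (Bᴴ * (Φ : Matrix (Fin p) (Fin p) ℂ)ᴴ *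
            Matrix.diagonal (fun k : Fin p => if p + (i : ℕ) + 1 ≤ (k : ℕ) + n then (1 : ℂ) else 0) *
            (Φ : Matrix (Fin p) (Fin p) ℂ) * B * (Aᴴ * A + Bᴴ * B)⁻¹)).re)) ∧
      (β i =
        (⨆ X3 : Matrix.unitaryGroup (Fin n) ℂ, ⨆ X4 : Matrix.unitaryGroup (Fin p) ℂ,
          Norm.norm (Matrix.trace ((X3 : Matrix (Fin n) (Fin n) ℂ) * S⁻¹ * Bᴴ *
            (X4 : Matrix (Fin p) (Fin p) ℂ) *
            Matrix.of (fun (k : Fin p) (l : Fin n) =>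
              if (l : ℕ) + p = n + (k : ℕ) ∧ p + (i : ℕ) ≤ (k : ℕ) + n then (1 : ℂ) else 0)))) -
        (⨆ X3 : Matrix.unitaryGroup (Fin n) ℂ, ⨆ X4 : Matrix.unitaryGroup (Fin p) ℂ,
          Norm.norm (Matrix.trace ((X3 : Matrix (Fin n) (Fin n) ℂ) * S⁻¹ * Bᴴ *
            (X4 : Matrix (Fin p) (Fin p) ℂ) *
            Matrix.of (fun (k : Fin p) (l : Fin n) =>
              if (l : ℕ) + p = n + (k : ℕ) ∧ p + (i : ℕ) + 1 ≤ (k : ℕ) + n then (1 : ℂ) else 0))))) := by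
    intro i hi
    have hilt : (i : ℕ) < n := i.isLt
    have hk0lt : p + (i : ℕ) - n < p := by omega
    set k₀ : Fin p := ⟨p + (i : ℕ) - n, hk0lt⟩ with hk₀
    have hk0n : (k₀ : ℕ) + n = p + (i : ℕ) := by simp only [hk₀]; omega
    have hg : gmap hpn k₀ = i := by
      apply Fin.ext
      rw [gmap_coe]
      simp only [hk₀]
      omega
    constructor
    · rw [sup1 hpn A B V hV R hR β hβ0 hmono hzero hB hAA (p + (i : ℕ)),
        sup1 hpn A B V hV R hR β hβ0 hmono hzero hB hAA (p + (i : ℕ) + 1),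
        tele (fun k : Fin p => (β (gmap hpn k))^2) (p + (i : ℕ)) k₀ hk0n, hg]
    · rw [sup2 hpn A B V hV R hR β hβ0 hmono hzero hB hAA S hS hSsq (p + (i : ℕ)),
        sup2 hpn A B V hV R hR β hβ0 hmono hzero hB hAA S hS hSsq (p + (i : ℕ) + 1),
        tele (fun k : Fin p => β (gmap hpn k)) (p + (i : ℕ)) k₀ hk0n, hg]
  constructor
  · intro h1 i hi
    exact main i (by have := i.isLt; omega)
  · intro h2
    exact ⟨fun k _ hk2 => hzero k hk2, fun i hi => main i hi⟩
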